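/- Let α be an arc weight of a digraph G ∈ 𝔗_a. Then G(α)_ν ∈ 𝔗_a for every ν ∈ ℕ₀. If moreover G is a poset, then the digraph obtained from the transitive hull of G(α)_ν by adding a loop at every newly added vertex is a poset. -/

import Mathlib

/-- A finite digraph: a finite nonempty vertex set `V ⊆ ℕ` together with an
arc set `A ⊆ V × V`. -/
structure Dgraph where
  V : Finset ℕ
  nonempty : V.Nonempty
  A : Finset (ℕ × ℕ)
  A_sub : ∀ p ∈ A, p.1 ∈ V ∧ p.2 ∈ V

namespace Dgraph

/-- The set of proper arcs of `G`, i.e. the arc set of `G*`. -/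
def Astar (G : Dgraph) : Finset (ℕ × ℕ) := G.A.filter (fun p => p.1 ≠ p.2)

/-- `G` is reflexive. -/
def IsRefl (G : Dgraph) : Prop := ∀ v ∈ G.V, (v, v) ∈ G.A

/-- `p` is a path in `G` (a nonempty list of pairwise distinct vertices,
consecutive ones joined by arcs).  Its length as a path is `p.length - 1`. -/
def IsPath (G : Dgraph) (p : List ℕ) : Prop :=
  p ≠ [] ∧ p.Nodup ∧ (∀ v ∈ p, v ∈ G.V) ∧ p.Chain' (fun v w => (v, w) ∈ G.A)

/-- `p` is a path in `G*`. -/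
def IsPathStar (G : Dgraph) (p : List ℕ) : Prop :=
  p ≠ [] ∧ p.Nodup ∧ (∀ v ∈ p, v ∈ G.V) ∧ p.Chain' (fun v w => (v, w) ∈ G.A ∧ v ≠ w)

/-- `G*` contains a closed walk. -/
def HasClosedWalkStar (G : Dgraph) : Prop :=
  ∃ p : List ℕ, (∀ v ∈ p, v ∈ G.V) ∧ p.Chain' (fun v w => (v, w) ∈ G.A ∧ v ≠ w) ∧
    2 ≤ p.length ∧ p.head? = p.getLast?

/-- membership in the class `𝔗ₐ`: `G*` is acyclic. -/
def MemTa (G : Dgraph) : Prop := ¬ G.HasClosedWalkStar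

/-- The height of `G`: the maximal length of a path in `G`. -/
noncomputable def height (G : Dgraph) : ℕ :=
  sSup {n | ∃ p, G.IsPath p ∧ p.length = n + 1}

/-- The interval `[v,w]_G`. -/
def interval (G : Dgraph) (v w : ℕ) : Finset ℕ :=
  G.V.filter (fun z => (v, z) ∈ G.A ∧ (z, w) ∈ G.A)

/-- `ι(v,w)_G`, the cardinality of the interval `[v,w]_G`. -/
def iota (G : Dgraph) (v w : ℕ) : ℕ := (G.interval v w).card

/-- The set `𝓗(G,H)` of homomorphisms from `G` to `H` (represented as total
maps `ℕ → ℕ`, normalized to `0` outside of `V(G)`). -/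
def Hom (G H : Dgraph) : Set (ℕ → ℕ) :=
  {f | (∀ v ∈ G.V, f v ∈ H.V) ∧ (∀ p ∈ G.A, (f p.1, f p.2) ∈ H.A) ∧
    ∀ v, v ∉ G.V → f v = 0}

/-- The set `𝓢(G,H)` of strict homomorphisms from `G` to `H`. -/
def SHom (G H : Dgraph) : Set (ℕ → ℕ) :=
  {f ∈ Hom G H | ∀ p ∈ G.Astar, f p.1 ≠ f p.2}

/-- `μ_ξ(G)`, for a homomorphism `ξ` from `G` into `H`. -/
def mu (G H : Dgraph) (f : ℕ → ℕ) : ℕ :=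
  ∑ p ∈ G.Astar, H.iota (f p.1) (f p.2)

/-- `L` is a subgraph of `G`. -/
def Subgraph (L G : Dgraph) : Prop := L.V ⊆ G.V ∧ L.A ⊆ G.A

/-- Restriction of a map to a vertex set (normalized to `0` outside). -/
def restrict (X : Finset ℕ) (f : ℕ → ℕ) : ℕ → ℕ := fun x => if x ∈ X then f x else 0

/-- `𝓜(L,H)`: homomorphisms from `L` to `H` with maximal `μ`. -/
def MSet (L H : Dgraph) : Set (ℕ → ℕ) :=
  {f ∈ Hom L H | ∀ g ∈ Hom L H, mu L H g ≤ mu L H f}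

/-- `𝓜^𝓛(G,H)`. -/
def MLSet (G H : Dgraph) (𝓛 : Set Dgraph) : Set (ℕ → ℕ) :=
  {f ∈ Hom G H | ∀ L ∈ 𝓛, restrict L.V f ∈ MSet L H}

/-- `𝓙^𝓛_{G,H'}(ξ)` for `ξ ∈ 𝓗(G,H)`. -/
def JSet (G H H' : Dgraph) (𝓛 : Set Dgraph) (ξ : ℕ → ℕ) : Set (ℕ → ℕ) :=
  {ζ ∈ Hom G H' | ∀ L ∈ 𝓛, ∀ p ∈ L.Astar,
    H'.iota (ζ p.1) (ζ p.2) = H.iota (ξ p.1) (ξ p.2)}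

/-- The digraph `P_×` of a path `P = P_0, …, P_ℓ`: vertex set `{P_0,…,P_ℓ}`
and arcs `P_{i-1}P_i`. -/
def pathGraph (P : List ℕ) (h : P ≠ []) : Dgraph where
  V := P.toFinset
  nonempty := by
    obtain ⟨a, t, rfl⟩ := List.exists_cons_of_ne_nil h
    exact ⟨a, by simp⟩
  A := (P.zip P.tail).toFinset
  A_sub := by
    intro p hp
    rw [List.mem_toFinset] at hp
    have h1 := List.of_mem_zip hp
    exact ⟨List.mem_toFinset.mpr h1.1, List.mem_toFinset.mpr (List.mem_of_mem_tail h1.2)⟩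

/-- `𝓛(G)`: the set of the digraphs `P_×` for the paths `P` of length `h_G` in `G`. -/
def LSet (G : Dgraph) : Set Dgraph :=
  {D | ∃ (P : List ℕ) (h : P ≠ []), G.IsPath P ∧ P.length = G.height + 1 ∧
    D = pathGraph P h}

/-- The class `𝕽`: reflexive digraphs `R ∈ 𝔗ₐ` with
`𝓜^{𝓛(R)}(R,R) ∩ 𝓢(R,R) ≠ ∅`. -/
def MemR (R : Dgraph) : Prop :=
  R.MemTa ∧ R.IsRefl ∧ (MLSet R R (LSet R) ∩ SHom R R).Nonempty

/-- `G` is a poset: reflexive, antisymmetric and transitive. -/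
def IsPoset (G : Dgraph) : Prop :=
  G.IsRefl ∧ (∀ v w, (v, w) ∈ G.A → (w, v) ∈ G.A → v = w) ∧
    (∀ u v w, (u, v) ∈ G.A → (v, w) ∈ G.A → (u, w) ∈ G.A)

/-- The class `𝔗ₐ^{=n}`: digraphs in `𝔗ₐ` of height `n` in which every vertex
lies on a path of length `n`. -/
def MemTaEq (n : ℕ) (G : Dgraph) : Prop :=
  G.MemTa ∧ G.height = n ∧ ∀ v ∈ G.V, ∃ p, G.IsPath p ∧ p.length = n + 1 ∧ v ∈ p

/-- A maximal path in `G`: no path in `G` properly contains its vertex set. -/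
def MaximalPath (G : Dgraph) (P : List ℕ) : Prop :=
  G.IsPath P ∧ ∀ Q, G.IsPath Q → (∀ v ∈ P, v ∈ Q) → ∀ v ∈ Q, v ∈ P

end Dgraph

open Dgraph

/-- The digraph `G(α)_ν`, built from `G` by clamping the new vertex sets
`X p` between the endpoints of each proper arc `p` of `G`.  (The hypotheses
on the sets `X p` — pairwise disjointness, disjointness from `V(G)` and
cardinality `ν·α(p)` — are stated as assumptions of the theorems.) -/
def extGraph (G : Dgraph) (X : ℕ × ℕ → Finset ℕ) : Dgraph where
  V := G.V ∪ G.Astar.biUnion X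
  nonempty := by
    obtain ⟨v, hv⟩ := G.nonempty
    exact ⟨v, Finset.mem_union_left _ hv⟩
  A := G.A ∪ G.Astar.biUnion
    (fun p => (X p).image (fun x => (p.1, x)) ∪ (X p).image (fun x => (x, p.2)))
  A_sub := by
    intro q hq
    rcases Finset.mem_union.mp hq with h | h
    · have h1 := G.A_sub q h
      exact ⟨Finset.mem_union_left _ h1.1, Finset.mem_union_left _ h1.2⟩
    · obtain ⟨p, hp, hq2⟩ := Finset.mem_biUnion.mp h
      have hpA : p ∈ G.A := Finset.mem_of_mem_filter p hp
      have hp1 := G.A_sub p hpA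
      rcases Finset.mem_union.mp hq2 with h2 | h2
      · obtain ⟨x, hx, rfl⟩ := Finset.mem_image.mp h2
        exact ⟨Finset.mem_union_left _ hp1.1,
          Finset.mem_union_right _ (Finset.mem_biUnion.mpr ⟨p, hp, hx⟩)⟩
      · obtain ⟨x, hx, rfl⟩ := Finset.mem_image.mp h2
        exact ⟨Finset.mem_union_right _ (Finset.mem_biUnion.mpr ⟨p, hp, hx⟩),
          Finset.mem_union_left _ hp1.2⟩

open Classical in
/-- The transitive hull `Tr(G)` of `G`. -/
noncomputable def trHull (G : Dgraph) : Dgraph where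
  V := G.V
  nonempty := G.nonempty
  A := (G.V ×ˢ G.V).filter (fun p => Relation.TransGen (fun a b => (a, b) ∈ G.A) p.1 p.2)
  A_sub := by
    intro p hp
    exact Finset.mem_product.mp (Finset.mem_filter.mp hp).1

/-- The digraph obtained from `D` by adding a loop at every vertex of `S`. -/
def withLoops (D : Dgraph) (S : Finset ℕ) : Dgraph where
  V := D.V
  nonempty := D.nonempty
  A := D.A ∪ (S ∩ D.V).image (fun x => (x, x))
  A_sub := by
    intro p hp
    rcases Finset.mem_union.mp hp with h | h
    · exact D.A_sub p h
    · obtain ⟨x, hx, rfl⟩ := Finset.mem_image.mp h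
      have h2 := Finset.mem_inter.mp hx
      exact ⟨h2.2, h2.2⟩


section Aux

open Dgraph

/-- Along a chain whose relation strictly increases `F`, `F` strictly increases
from the head to the last element. -/
lemma chain_lt {s : ℕ → ℕ → Prop} {F : ℕ → ℕ} (hF : ∀ v w, s v w → F v < F w) :
    ∀ (l : List ℕ) (a : ℕ), List.Chain s a l → ∀ (h : l ≠ []), F a < F (l.getLast h)
  | [], _, _, h => absurd rfl h
  | b :: t, a, hc, _ => by
    replace hc : s a b ∧ List.Chain s b t := List.isChain_cons_cons.mp hc
    rcases eq_or_ne t [] with rfl | ht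
    · simpa using hF a b hc.1
    · rw [List.getLast_cons ht]
      exact lt_trans (hF a b hc.1) (chain_lt hF t b hc.2 ht)

/-- Every vertex on a chain of arcs of length at least 2 lies in `V`. -/
lemma chain'_mem_V (G : Dgraph) : ∀ (l : List ℕ),
    l.Chain' (fun v w => (v, w) ∈ G.A ∧ v ≠ w) → 2 ≤ l.length → ∀ v ∈ l, v ∈ G.V
  | [], _, h2 => by simp at h2
  | [_], _, h2 => by simp at h2
  | a :: b :: t, hc, _ => by
    replace hc := List.isChain_cons_cons.mp hc
    intro v hv
    rcases List.mem_cons.mp hv with rfl | hv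
    · exact (G.A_sub _ hc.1.1).1
    · match t, hc.2, hv with
      | [], _, hv =>
        have hb : v = b := by simpa using hv
        subst hb; exact (G.A_sub _ hc.1.1).2
      | c :: t', hc2, hv =>
        exact chain'_mem_V G (b :: c :: t') hc2 (by simp) v hv

/-- `G ∈ 𝔗ₐ` implies that the proper-arc relation has no transitive cycles. -/
lemma no_transGen_cycle (G : Dgraph) (hG : G.MemTa) (a : ℕ) :
    ¬ Relation.TransGen (fun x y => (x, y) ∈ G.A ∧ x ≠ y) a a := by
  intro h
  obtain ⟨c, hac, hca⟩ := Relation.TransGen.head'_iff.mp h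
  obtain ⟨l, hchain, hlast⟩ := List.exists_isChain_cons_of_relationReflTransGen hca
  apply hG
  refine ⟨a :: c :: l, ?_, ?_, by simp, ?_⟩
  · exact chain'_mem_V G _ (List.isChain_cons_cons.mpr ⟨hac, hchain⟩) (by simp)
  · exact List.isChain_cons_cons.mpr ⟨hac, hchain⟩
  · have h1 : (a :: c :: l).getLast (by simp) = a := by
      rw [List.getLast_cons (List.cons_ne_nil _ _)]; exact hlast
    rw [List.getLast?_eq_getLast_of_ne_nil (by simp), h1]
    rfl

open Classical in
/-- A rank function: the number of vertices strictly below `a`. -/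
noncomputable def rkn (G : Dgraph) (a : ℕ) : ℕ :=
  (G.V.filter (fun b => Relation.TransGen (fun x y => (x, y) ∈ G.A ∧ x ≠ y) b a)).card

lemma rkn_lt (G : Dgraph) (hG : G.MemTa) {a b : ℕ} (h : (a, b) ∈ G.A) (hab : a ≠ b) :
    rkn G a < rkn G b := by
  classical
  apply Finset.card_lt_card
  have hsub : (G.V.filter (fun c => Relation.TransGen (fun x y => (x, y) ∈ G.A ∧ x ≠ y) c a))
      ⊆ (G.V.filter (fun c => Relation.TransGen (fun x y => (x, y) ∈ G.A ∧ x ≠ y) c b)) := by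
    intro c hc
    rw [Finset.mem_filter] at hc ⊢
    exact ⟨hc.1, hc.2.tail ⟨h, hab⟩⟩
  refine (Finset.ssubset_iff_of_subset hsub).mpr ⟨a, ?_, ?_⟩
  · rw [Finset.mem_filter]
    exact ⟨(G.A_sub _ h).1, Relation.TransGen.single ⟨h, hab⟩⟩
  · rw [Finset.mem_filter]
    rintro ⟨-, hcyc⟩
    exact no_transGen_cycle G hG a hcyc

end Aux

theorem stmt_18 (G : Dgraph) (hG : G.MemTa) (α : ℕ × ℕ → ℕ) (ν : ℕ)
    (X : ℕ × ℕ → Finset ℕ)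
    (hdisj : ∀ p ∈ G.Astar, ∀ q ∈ G.Astar, p ≠ q → Disjoint (X p) (X q))
    (hdisjV : ∀ p ∈ G.Astar, Disjoint (X p) G.V)
    (hcard : ∀ p ∈ G.Astar, (X p).card = ν * α p) :
    (extGraph G X).MemTa ∧
    (G.IsPoset →
      (withLoops (trHull (extGraph G X)) (G.Astar.biUnion X)).IsPoset) := by
  classical
  set H := extGraph G X with hH
  -- the height-like function on vertices of `H`
  set F : ℕ → ℕ := fun u =>
    if u ∈ G.V then 2 * rkn G u
    else 2 * ((G.Astar.filter (fun p => u ∈ X p)).sup fun p => rkn G p.1) + 1 with hF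
  have hFold : ∀ u ∈ G.V, F u = 2 * rkn G u := by
    intro u hu; simp [hF, hu]
  have hFnew : ∀ p ∈ G.Astar, ∀ x ∈ X p, F x = 2 * rkn G p.1 + 1 := by
    intro p hp x hx
    have hxV : x ∉ G.V := Finset.disjoint_left.mp (hdisjV p hp) hx
    have hfilter : G.Astar.filter (fun q => x ∈ X q) = {p} := by
      apply Finset.eq_singleton_iff_unique_mem.mpr
      refine ⟨Finset.mem_filter.mpr ⟨hp, hx⟩, ?_⟩
      intro q hq
      rw [Finset.mem_filter] at hq
      by_contra hqp
      exact Finset.disjoint_left.mp (hdisj q hq.1 p hp hqp) hq.2 hx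
    simp [hF, hxV, hfilter]
  -- the arcs of G used in the construction are proper arcs of G
  have hAstar : ∀ p ∈ G.Astar, (p.1, p.2) ∈ G.A ∧ p.1 ≠ p.2 := by
    intro p hp
    rw [Astar, Finset.mem_filter] at hp
    exact hp
  -- every proper arc of H strictly increases F
  have hstep : ∀ u w : ℕ, (u, w) ∈ H.A → u ≠ w → F u < F w := by
    intro u w huw hne
    rcases Finset.mem_union.mp huw with h | h
    · have h1 := G.A_sub _ h
      rw [hFold u h1.1, hFold w h1.2]
      have := rkn_lt G hG h hne
      omega
    · obtain ⟨p, hp, hq⟩ := Finset.mem_biUnion.mp h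
      rcases Finset.mem_union.mp hq with h2 | h2
      · obtain ⟨x, hx, hpr⟩ := Finset.mem_image.mp h2
        injection hpr with e1 e2
        subst e1; subst e2
        rw [hFold p.1 (G.A_sub _ (hAstar p hp).1).1, hFnew p hp _ hx]
        omega
      · obtain ⟨x, hx, hpr⟩ := Finset.mem_image.mp h2
        injection hpr with e1 e2
        subst e1; subst e2
        rw [hFnew p hp _ hx, hFold p.2 (G.A_sub _ (hAstar p hp).1).2]
        have hlt : rkn G p.1 < rkn G p.2 := rkn_lt G hG (hAstar p hp).1 (hAstar p hp).2
        omega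
  have hMemTa : H.MemTa := by
    rintro ⟨l, hV, hchain, hlen, hhl⟩
    match l, hchain, hlen, hhl with
    | a :: b :: t, hchain, _, hhl =>
      have hc : List.Chain (fun v w => (v, w) ∈ H.A ∧ v ≠ w) a (b :: t) := hchain
      have hlt := chain_lt (F := F)
        (fun v w hvw => hstep v w hvw.1 hvw.2) (b :: t) a hc (by simp)
      rw [List.getLast?_eq_getLast_of_ne_nil (by simp : a :: b :: t ≠ [])] at hhl
      have : a = (a :: b :: t).getLast (by simp) := by
        injection hhl
      rw [List.getLast_cons (List.cons_ne_nil _ _)] at this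
      rw [← this] at hlt
      exact lt_irrefl _ hlt
  refine ⟨hMemTa, ?_⟩
  rintro ⟨hrefl, hanti, htrans⟩
  -- F is monotone along the transitive closure of all arcs of H, strictly so
  -- between distinct vertices
  have hmono : ∀ a b : ℕ, Relation.TransGen (fun x y => (x, y) ∈ H.A) a b →
      F a ≤ F b ∧ (a ≠ b → F a < F b) := by
    intro a b h
    induction h with
    | @single c hc =>
      constructor
      · rcases eq_or_ne a c with rfl | hne
        · exact le_refl _
        · exact le_of_lt (hstep _ _ hc hne)
      · intro hne; exact hstep _ _ hc hne
    | @tail c d h1 h2 ih =>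
      rcases eq_or_ne c d with rfl | hne
      · exact ih
      · have := hstep _ _ h2 hne
        exact ⟨le_of_lt (lt_of_le_of_lt ih.1 this), fun _ => lt_of_le_of_lt ih.1 this⟩
  constructor
  · -- reflexivity
    intro v hv
    have hvH : v ∈ H.V := hv
    rcases Finset.mem_union.mp hvH with h | h
    · apply Finset.mem_union_left
      rw [trHull]
      refine Finset.mem_filter.mpr ⟨Finset.mem_product.mpr ⟨hvH, hvH⟩, ?_⟩
      exact Relation.TransGen.single (Finset.mem_union_left _ (hrefl v h))
    · apply Finset.mem_union_right
      exact Finset.mem_image.mpr ⟨v, Finset.mem_inter.mpr ⟨h, hvH⟩, rfl⟩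
  constructor
  · -- antisymmetry
    intro v w hvw hwv
    rcases Finset.mem_union.mp hvw with h1 | h1
    · rcases Finset.mem_union.mp hwv with h2 | h2
      · have t1 := (Finset.mem_filter.mp h1).2
        have t2 := (Finset.mem_filter.mp h2).2
        by_contra hne
        have l1 := (hmono v w t1).2 hne
        have l2 := (hmono w v t2).2 (Ne.symm hne)
        omega
      · obtain ⟨x, _, hpr⟩ := Finset.mem_image.mp h2
        have := (Prod.mk.injEq _ _ _ _ ▸ hpr)
        omega
    · obtain ⟨x, _, hpr⟩ := Finset.mem_image.mp h1
      have := (Prod.mk.injEq _ _ _ _ ▸ hpr)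
      omega
  · -- transitivity
    intro u v w huv hvw
    rcases Finset.mem_union.mp huv with h1 | h1
    · rcases Finset.mem_union.mp hvw with h2 | h2
      · have t1 := Finset.mem_filter.mp h1
        have t2 := Finset.mem_filter.mp h2
        apply Finset.mem_union_left
        refine Finset.mem_filter.mpr ⟨?_, t1.2.trans t2.2⟩
        exact Finset.mem_product.mpr
          ⟨(Finset.mem_product.mp t1.1).1, (Finset.mem_product.mp t2.1).2⟩
      · obtain ⟨x, _, hpr⟩ := Finset.mem_image.mp h2
        have hx := (Prod.mk.injEq _ _ _ _ ▸ hpr)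
        have : v = w := by omega
        subst this; exact huv
    · obtain ⟨x, _, hpr⟩ := Finset.mem_image.mp h1
      have hx := (Prod.mk.injEq _ _ _ _ ▸ hpr)
      have : u = v := by omega
      subst this; exact hvw
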